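/- Let ρ be an n×n density matrix of rank k, and let V be an n×n Hermitian matrix with trace(V) = 0 such that ⟨Vx, y⟩ = 0 for all x, y ∈ ℂⁿ with ρx = 0 and ρy = 0. Then there exists ε > 0 and a differentiable curve γ : (−ε, ε) → (n×n Hermitian matrices) with γ(0) = ρ, γ'(0) = V, and such that γ(t) is a density matrix of rank k for every t ∈ (−ε, ε). -/

import Mathlib

open scoped ComplexOrder Matrix

section TangentAux

open Matrix Complex

private lemma quad_conj' {n : ℕ} {M : Matrix (Fin n) (Fin n) ℂ} (hM : M.IsHermitian)
    (x : Fin n → ℂ) :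
    star (star x ⬝ᵥ (M *ᵥ x)) = star x ⬝ᵥ (M *ᵥ x) := by
  conv_lhs => rw [← star_dotProduct, star_mulVec, hM.eq, ← dotProduct_mulVec]

private lemma diag_quad' {n : ℕ} (d : Fin n → ℝ) (x : Fin n → ℂ) :
    star x ⬝ᵥ (Matrix.diagonal (fun i => (d i : ℂ)) *ᵥ x)
      = ((∑ i, d i * Complex.normSq (x i) : ℝ) : ℂ) := by
  simp only [dotProduct, mulVec_diagonal, Pi.star_apply, RCLike.star_def]
  push_cast
  refine Finset.sum_congr rfl fun i _ => ?_
  rw [show (starRingEnd ℂ) (x i) * ((d i : ℂ) * x i)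
      = (d i : ℂ) * ((starRingEnd ℂ) (x i) * x i) by ring,
    ← Complex.normSq_eq_conj_mul_self]

private lemma key_diag {n : ℕ} (d : Fin n → ℝ) (c : ℝ)
    (hcd : ∀ i, d i ≠ 0 → c ≤ d i)
    (D : Matrix (Fin n) (Fin n) ℂ) (hD : D.IsHermitian)
    (hsupp : ∀ i j, d i = 0 ∨ d j = 0 → D i j = 0)
    (t : ℝ) (ht : |t| * (∑ i, ∑ j, ‖D i j‖) < c) :
    (Matrix.diagonal (fun i => (d i : ℂ)) + (t : ℂ) • D).PosSemidef ∧
      ∀ x : Fin n → ℂ,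
        ((Matrix.diagonal (fun i => (d i : ℂ)) + (t : ℂ) • D) *ᵥ x = 0 ↔
          Matrix.diagonal (fun i => (d i : ℂ)) *ᵥ x = 0) := by
  set Δ : Matrix (Fin n) (Fin n) ℂ := Matrix.diagonal (fun i => (d i : ℂ)) with hΔ
  set S : ℝ := ∑ i, ∑ j, ‖D i j‖ with hSdef
  have hS : 0 ≤ S := Finset.sum_nonneg fun i _ => Finset.sum_nonneg fun j _ => by positivity
  have hΔH : Δ.IsHermitian := by
    rw [hΔ]
    exact isHermitian_diagonal_iff.mpr fun i => Complex.conj_ofReal (d i)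
  have hherm : (Δ + (t:ℂ) • D).IsHermitian := by
    refine hΔH.add ?_
    rw [Matrix.IsHermitian, conjTranspose_smul, hD.eq]
    simp [Complex.conj_ofReal]
  -- the restricted mass
  set m : (Fin n → ℂ) → ℝ := fun x => ∑ i, (if d i = 0 then 0 else Complex.normSq (x i))
    with hmdef
  have hm0 : ∀ x, 0 ≤ m x := fun x =>
    Finset.sum_nonneg fun i _ => by split <;> [rfl; exact Complex.normSq_nonneg _]
  have hmx : ∀ (x : Fin n → ℂ) i, d i ≠ 0 → Complex.normSq (x i) ≤ m x := by
    intro x i hi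
    have := Finset.single_le_sum (f := fun i => if d i = 0 then 0 else Complex.normSq (x i))
      (fun j _ => by by_cases h : d j = 0 <;> simp [h, Complex.normSq_nonneg]) (Finset.mem_univ i)
    simpa [hi] using this
  -- bound on |x† D x|
  have hDbound : ∀ x : Fin n → ℂ, ‖star x ⬝ᵥ (D *ᵥ x)‖ ≤ S * m x := by
    intro x
    have h1 : ‖star x ⬝ᵥ (D *ᵥ x)‖
        ≤ ∑ i, ∑ j, ‖star (x i) * (D i j * x j)‖ := by
      refine le_trans (norm_sum_le _ _) ?_
      refine Finset.sum_le_sum fun i _ => ?_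
      simp only [mulVec, dotProduct, Finset.mul_sum]
      exact norm_sum_le _ _
    refine le_trans h1 ?_
    rw [hSdef, Finset.sum_mul]
    refine Finset.sum_le_sum fun i _ => ?_
    rw [Finset.sum_mul]
    refine Finset.sum_le_sum fun j _ => ?_
    rcases eq_or_ne (D i j) 0 with h0 | h0
    · simp [h0, hm0 x, mul_nonneg hS (hm0 x)]
    · have hdi : d i ≠ 0 := fun h => h0 (hsupp i j (Or.inl h))
      have hdj : d j ≠ 0 := fun h => h0 (hsupp i j (Or.inr h))
      have hxi : Complex.normSq (x i) ≤ m x := hmx x i hdi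
      have hxj : Complex.normSq (x j) ≤ m x := hmx x j hdj
      have habs : ‖star (x i) * (D i j * x j)‖
          = ‖D i j‖ * (‖x i‖ * ‖x j‖) := by
        rw [norm_mul, norm_mul, Complex.star_def, Complex.norm_conj]
        ring
      rw [habs]
      have h2 : ‖x i‖ * ‖x j‖ ≤ m x := by
        have e1 : ‖x i‖ ^ 2 = Complex.normSq (x i) := Complex.sq_norm _
        have e2 : ‖x j‖ ^ 2 = Complex.normSq (x j) := Complex.sq_norm _
        nlinarith [norm_nonneg (x i), norm_nonneg (x j),
          two_mul_le_add_sq (‖x i‖) (‖x j‖)]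
      exact mul_le_mul_of_nonneg_left h2 (norm_nonneg _)
  -- the real part estimate
  have hquad : ∀ x : Fin n → ℂ,
      (c - |t| * S) * m x ≤ (star x ⬝ᵥ ((Δ + (t:ℂ) • D) *ᵥ x)).re := by
    intro x
    have hsplit : star x ⬝ᵥ ((Δ + (t:ℂ) • D) *ᵥ x)
        = star x ⬝ᵥ (Δ *ᵥ x) + (t:ℂ) * (star x ⬝ᵥ (D *ᵥ x)) := by
      rw [add_mulVec, dotProduct_add, smul_mulVec, dotProduct_smul, smul_eq_mul]
    rw [hsplit, Complex.add_re, diag_quad', Complex.ofReal_re]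
    have hre : ((t:ℂ) * (star x ⬝ᵥ (D *ᵥ x))).re = t * (star x ⬝ᵥ (D *ᵥ x)).re := by
      simp [Complex.re_ofReal_mul]
    have hlow : -( |t| * (S * m x)) ≤ t * (star x ⬝ᵥ (D *ᵥ x)).re := by
      have h3 : |t * (star x ⬝ᵥ (D *ᵥ x)).re| ≤ |t| * (S * m x) := by
        rw [abs_mul]
        refine mul_le_mul_of_nonneg_left ?_ (abs_nonneg t)
        exact le_trans (Complex.abs_re_le_norm _) (by simpa [mul_assoc] using hDbound x)
      linarith [neg_abs_le (t * (star x ⬝ᵥ (D *ᵥ x)).re)]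
    have hdsum : c * m x ≤ ∑ i, d i * Complex.normSq (x i) := by
      rw [hmdef, Finset.mul_sum]
      refine Finset.sum_le_sum fun i _ => ?_
      rcases eq_or_ne (d i) 0 with h | h
      · simp [h]
      · simp only [h, if_neg h]
        exact mul_le_mul_of_nonneg_right (hcd i h) (Complex.normSq_nonneg _)
    rw [hre]
    nlinarith [hm0 x]
  have hpos : 0 < c - |t| * S := by linarith
  constructor
  · refine PosSemidef.of_dotProduct_mulVec_nonneg hherm fun x => ?_
    rw [Complex.le_def]
    constructor
    · simp only [Complex.zero_re]
      have := hquad x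
      nlinarith [hm0 x]
    · have := quad_conj' hherm x
      rw [Complex.zero_im, eq_comm, ← Complex.conj_eq_iff_im]
      exact this
  · intro x
    constructor
    · intro hx
      have hq0 : star x ⬝ᵥ ((Δ + (t:ℂ) • D) *ᵥ x) = 0 := by rw [hx, dotProduct_zero]
      have hm : m x = 0 := by
        have := hquad x
        rw [hq0] at this
        simp only [Complex.zero_re] at this
        nlinarith [hm0 x]
      have hzero : ∀ i, d i ≠ 0 → x i = 0 := by
        intro i hi
        have hterm : (if d i = 0 then 0 else Complex.normSq (x i)) = 0 := by
          have hnn : ∀ j ∈ Finset.univ, 0 ≤ (if d j = 0 then 0 else Complex.normSq (x j)) :=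
            fun j _ => by by_cases h : d j = 0 <;> simp [h, Complex.normSq_nonneg]
          exact (Finset.sum_eq_zero_iff_of_nonneg hnn).mp hm i (Finset.mem_univ i)
        rw [if_neg hi] at hterm
        exact Complex.normSq_eq_zero.mp hterm
      ext i
      rw [hΔ]
      simp only [mulVec_diagonal, Pi.zero_apply]
      rcases eq_or_ne (d i) 0 with h | h
      · simp [h]
      · simp [hzero i h]
    · intro hx
      have hzero : ∀ i, d i ≠ 0 → x i = 0 := by
        intro i hi
        have := congr_fun hx i
        rw [hΔ] at this
        simp only [mulVec_diagonal, Pi.zero_apply, mul_eq_zero] at this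
        rcases this with h | h
        · exact absurd (Complex.ofReal_eq_zero.mp h) hi
        · exact h
      have hDx : D *ᵥ x = 0 := by
        ext i
        simp only [mulVec, dotProduct, Pi.zero_apply]
        refine Finset.sum_eq_zero fun j _ => ?_
        rcases eq_or_ne (d j) 0 with h | h
        · rw [hsupp i j (Or.inr h), zero_mul]
        · rw [hzero j h, mul_zero]
      rw [add_mulVec, hx, smul_mulVec, hDx, smul_zero, add_zero]

private lemma psd_diag_nonneg' {n : ℕ} {M : Matrix (Fin n) (Fin n) ℂ} (hM : M.PosSemidef)
    (i : Fin n) : 0 ≤ M i i := by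
  have := hM.dotProduct_mulVec_nonneg (Pi.single i 1)
  have e : star (Pi.single i 1 : Fin n → ℂ) = Pi.single i 1 := by
    ext j
    by_cases h : j = i <;> simp [h, Pi.single_apply]
  rw [e] at this
  simpa [single_dotProduct] using this

private lemma psd_trace_nonneg' {n : ℕ} {M : Matrix (Fin n) (Fin n) ℂ} (hM : M.PosSemidef) :
    0 ≤ M.trace := by
  rw [Matrix.trace]
  exact Finset.sum_nonneg fun i _ => psd_diag_nonneg' hM i

private lemma psd_real_smul' {n : ℕ} {M : Matrix (Fin n) (Fin n) ℂ} (hM : M.PosSemidef) {r : ℝ}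
    (hr : 0 ≤ r) : ((r : ℂ) • M).PosSemidef := by
  refine PosSemidef.of_dotProduct_mulVec_nonneg ?_ ?_
  · rw [Matrix.IsHermitian, conjTranspose_smul, hM.1.eq]
    simp [Complex.conj_ofReal]
  · intro x
    rw [smul_mulVec, dotProduct_smul, smul_eq_mul]
    exact mul_nonneg (Complex.zero_le_real.mpr hr) (hM.dotProduct_mulVec_nonneg x)

private lemma rank_smul'' {n : ℕ} (M : Matrix (Fin n) (Fin n) ℂ) {a : ℂ} (ha : a ≠ 0) :
    (a • M).rank = M.rank := by
  have h1 : a • M = (a • (1 : Matrix (Fin n) (Fin n) ℂ)) * M := by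
    rw [Matrix.smul_mul, one_mul]
  rw [h1]
  apply Matrix.rank_mul_eq_right_of_isUnit_det
  rw [Matrix.det_smul, Matrix.det_one, mul_one]
  exact isUnit_iff_ne_zero.mpr (pow_ne_zero _ ha)

private lemma rank_eq_of_ker_eq' {n : ℕ} (A B : Matrix (Fin n) (Fin n) ℂ)
    (h : ∀ x, A *ᵥ x = 0 ↔ B *ᵥ x = 0) : A.rank = B.rank := by
  have hk : LinearMap.ker A.mulVecLin = LinearMap.ker B.mulVecLin := by
    ext x
    simp only [LinearMap.mem_ker, mulVecLin_apply]
    exact h x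
  have h1 := LinearMap.finrank_range_add_finrank_ker A.mulVecLin
  have h2 := LinearMap.finrank_range_add_finrank_ker B.mulVecLin
  rw [hk] at h1
  rw [Matrix.rank, Matrix.rank]
  omega

private lemma cubic_deriv' (a b c e : ℂ) :
    HasDerivAt (fun t : ℝ => a + (t:ℂ) * b + (t:ℂ)^2 * c + (t:ℂ)^3 * e) b 0 := by
  have hob : HasDerivAt (fun t : ℝ => (t : ℂ)) 1 0 := by
    have h := Complex.ofRealCLM.hasDerivAt (x := (0:ℝ))
    simp at h
    exact h
  have h1 : HasDerivAt (fun t : ℝ => a + (t:ℂ) * b) b 0 := by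
    simpa using (hob.mul_const b).const_add a
  have htt : HasDerivAt (fun t : ℝ => (t:ℂ) * (t:ℂ)) 0 0 := by
    have h := hob.mul hob
    simp at h
    exact h
  have h2 : HasDerivAt (fun t : ℝ => (t:ℂ)^2 * c) 0 0 := by
    simpa [pow_two] using htt.mul_const c
  have h3 : HasDerivAt (fun t : ℝ => (t:ℂ)^3 * e) 0 0 := by
    have := (htt.mul hob).mul_const e
    simpa [pow_succ, pow_two] using this
  have h := (h1.add h2).add h3
  simp only [add_zero] at h
  exact h

private lemma entry_eq' {n : ℕ} (U V : Matrix (Fin n) (Fin n) ℂ) (hV : V.IsHermitian)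
    (i j : Fin n) :
    star (V *ᵥ (U *ᵥ Pi.single i 1)) ⬝ᵥ (U *ᵥ Pi.single j 1) = (star U * V * U) i j := by
  have hcol : ∀ l : Fin n, (U *ᵥ Pi.single l 1) = fun a => U a l := by
    intro l; funext a; simp [mulVec_single]
  rw [hcol i, hcol j]
  simp only [mulVec, dotProduct, Pi.star_apply, Matrix.mul_apply, star_sum, star_mul',
    Matrix.star_eq_conjTranspose, Matrix.conjTranspose_apply]
  refine Finset.sum_congr rfl fun a _ => ?_
  rw [Finset.sum_mul, Finset.sum_mul]
  refine Finset.sum_congr rfl fun b _ => ?_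
  have : star (V a b) = V b a := by rw [← Matrix.conjTranspose_apply, hV.eq]
  rw [this]
  ring

private lemma factor_eq {n : ℕ} (U X Δ Dm : Matrix (Fin n) (Fin n) ℂ) (t : ℝ) :
    (U * (1 + (t:ℂ) • X)) * (Δ + (t:ℂ) • Dm) * (U * (1 + (t:ℂ) • X))ᴴ
      = U * Δ * star U + (t:ℂ) • (U * (X * Δ + Δ * Xᴴ + Dm) * star U)
        + (t:ℂ)^2 • (U * (X * Δ * Xᴴ + X * Dm + Dm * Xᴴ) * star U)
        + (t:ℂ)^3 • (U * (X * Dm * Xᴴ) * star U) := by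
  have h1 : (U * (1 + (t:ℂ) • X))ᴴ = (1 + (t:ℂ) • Xᴴ) * star U := by
    rw [conjTranspose_mul, conjTranspose_add, conjTranspose_one, conjTranspose_smul]
    simp [Complex.conj_ofReal, Matrix.star_eq_conjTranspose]
  rw [h1]
  simp only [Matrix.mul_add, Matrix.add_mul, Matrix.smul_mul, Matrix.mul_smul, Matrix.mul_one,
    Matrix.one_mul, smul_smul, smul_add, mul_assoc, pow_two, pow_succ, pow_one]
  module

end TangentAux

open Matrix Complex

/-- If `ρ` is an `n×n` density matrix of rank `k` and `V` is a trace-zero Hermitian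
matrix vanishing on the kernel of `ρ`, then there is a differentiable curve of rank-`k`
density matrices through `ρ` with velocity `V` at `ρ`. -/
theorem tangent_realized_by_curve {n k : ℕ} (ρ : Matrix (Fin n) (Fin n) ℂ)
    (hρ : ρ.PosSemidef) (htr : ρ.trace = 1) (hrank : ρ.rank = k)
    (V : Matrix (Fin n) (Fin n) ℂ) (hV : V.IsHermitian) (hVtr : V.trace = 0)
    (hker : ∀ x y : Fin n → ℂ, ρ *ᵥ x = 0 → ρ *ᵥ y = 0 → star (V *ᵥ x) ⬝ᵥ y = 0) :
    ∃ ε > (0 : ℝ), ∃ γ : ℝ → Matrix (Fin n) (Fin n) ℂ,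
      γ 0 = ρ ∧ (∀ i j, HasDerivAt (fun t => γ t i j) (V i j) 0) ∧
      ∀ t : ℝ, |t| < ε →
        (γ t).PosSemidef ∧ (γ t).trace = 1 ∧ (γ t).rank = k := by
  classical
  have hH : ρ.IsHermitian := hρ.1
  set U : Matrix (Fin n) (Fin n) ℂ := (hH.eigenvectorUnitary : Matrix (Fin n) (Fin n) ℂ)
    with hUdef
  have hU2 : U * star U = 1 := Matrix.mem_unitaryGroup_iff.mp (hH.eigenvectorUnitary).2
  have hU1 : star U * U = 1 := Matrix.mem_unitaryGroup_iff'.mp (hH.eigenvectorUnitary).2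
  set d : Fin n → ℝ := hH.eigenvalues with hddef
  have hd : ∀ i, 0 ≤ d i := fun i => hρ.eigenvalues_nonneg i
  set Δ : Matrix (Fin n) (Fin n) ℂ := Matrix.diagonal (fun i => (d i : ℂ)) with hΔdef
  have hspec : ρ = U * Δ * star U := by
    have h := hH.spectral_theorem
    rw [hΔdef, hddef, hUdef]
    exact h
  have htrd : ∑ i, d i = 1 := by
    have h1 : ρ.trace = Δ.trace := by
      rw [hspec, Matrix.trace_mul_cycle, hU1, one_mul]
    rw [htr, hΔdef] at h1
    simp only [Matrix.trace_diagonal] at h1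
    exact_mod_cast h1.symm
  -- minimum positive eigenvalue
  set P : Finset (Fin n) := Finset.univ.filter (fun i => d i ≠ 0) with hPdef
  have hPne : P.Nonempty := by
    by_contra h
    rw [Finset.not_nonempty_iff_eq_empty] at h
    have : ∀ i, d i = 0 := by
      intro i
      by_contra hi
      have : i ∈ P := by simp [hPdef, hi]
      simp [h] at this
    have : (1:ℝ) = 0 := by rw [← htrd]; exact Finset.sum_eq_zero fun i _ => this i
    norm_num at this
  set c : ℝ := P.inf' hPne d with hcdef
  have hc0 : 0 < c := by
    rw [hcdef, Finset.lt_inf'_iff]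
    intro i hi
    rw [hPdef, Finset.mem_filter] at hi
    exact lt_of_le_of_ne (hd i) (Ne.symm hi.2)
  have hcd : ∀ i, d i ≠ 0 → c ≤ d i := by
    intro i hi
    exact Finset.inf'_le _ (by simp [hPdef, hi])
  -- transported velocity
  set W : Matrix (Fin n) (Fin n) ℂ := star U * V * U with hWdef
  have hWH : W.IsHermitian := by
    rw [Matrix.IsHermitian, hWdef, conjTranspose_mul, conjTranspose_mul, hV.eq]
    simp [Matrix.star_eq_conjTranspose, mul_assoc]
  have hVW : V = U * W * star U := by
    rw [hWdef]
    rw [show U * (star U * V * U) * star U = (U * star U) * V * (U * star U) by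
      simp only [mul_assoc]]
    rw [hU2, one_mul, mul_one]
  have hWker : ∀ i j, d i = 0 → d j = 0 → W i j = 0 := by
    intro i j hi hj
    have hcoli : ρ *ᵥ (U *ᵥ Pi.single i 1) = 0 := by
      rw [mulVec_mulVec, show ρ * U = U * Δ by
        rw [hspec, mul_assoc, mul_assoc, hU1, mul_one], ← mulVec_mulVec, hΔdef,
        diagonal_mulVec_single]
      simp [hi]
    have hcolj : ρ *ᵥ (U *ᵥ Pi.single j 1) = 0 := by
      rw [mulVec_mulVec, show ρ * U = U * Δ by
        rw [hspec, mul_assoc, mul_assoc, hU1, mul_one], ← mulVec_mulVec, hΔdef,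
        diagonal_mulVec_single]
      simp [hj]
    have := hker _ _ hcoli hcolj
    rwa [entry_eq' U V hV i j, ← hWdef] at this
  -- correction matrices
  set X : Matrix (Fin n) (Fin n) ℂ :=
    Matrix.of (fun i j => if d i = 0 ∧ d j ≠ 0 then W i j / (d j : ℂ) else 0) with hXdef
  set Dm : Matrix (Fin n) (Fin n) ℂ :=
    Matrix.of (fun i j => if d i ≠ 0 ∧ d j ≠ 0 then W i j else 0) with hDmdef
  have hDmH : Dm.IsHermitian := by
    rw [Matrix.IsHermitian]
    ext i j
    rw [Matrix.conjTranspose_apply, hDmdef]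
    simp only [Matrix.of_apply]
    by_cases h1 : d i ≠ 0 <;> by_cases h2 : d j ≠ 0 <;>
      simp [h1, h2, ← Matrix.conjTranspose_apply, hWH.eq]
  have hDmsupp : ∀ i j, d i = 0 ∨ d j = 0 → Dm i j = 0 := by
    intro i j h
    rw [hDmdef]
    rcases h with h | h <;> simp [Matrix.of_apply, h]
  have hXsq : X * X = 0 := by
    ext i j
    rw [Matrix.mul_apply, hXdef]
    simp only [Matrix.of_apply, Matrix.zero_apply]
    refine Finset.sum_eq_zero fun l _ => ?_
    by_cases h : d l = 0 <;> simp [h]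
  -- the key algebraic identity
  have hident : X * Δ + Δ * Xᴴ + Dm = W := by
    ext i j
    rw [Matrix.add_apply, Matrix.add_apply, hΔdef, Matrix.mul_diagonal, Matrix.diagonal_mul,
      Matrix.conjTranspose_apply, hXdef, hDmdef]
    simp only [Matrix.of_apply]
    by_cases h1 : d i = 0 <;> by_cases h2 : d j = 0
    · simp [h1, h2, hWker i j h1 h2]
    · have hdj : (d j : ℂ) ≠ 0 := Complex.ofReal_ne_zero.mpr h2
      simp [h1, h2, div_mul_cancel₀ _ hdj]
    · have hdi : (d i : ℂ) ≠ 0 := Complex.ofReal_ne_zero.mpr h1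
      have hWc : star (W j i) = W i j := by rw [← Matrix.conjTranspose_apply, hWH.eq]
      rw [if_neg (fun hc => h1 hc.1), if_pos ⟨h2, h1⟩, if_neg (fun hc => hc.2 h2)]
      rw [star_div₀, hWc, Complex.star_def, Complex.conj_ofReal]
      field_simp
      simp
    · simp [h1, h2]
  -- second and third order matrices
  set B : Matrix (Fin n) (Fin n) ℂ :=
    U * (X * Δ * Xᴴ + X * Dm + Dm * Xᴴ) * star U with hBdef
  set C : Matrix (Fin n) (Fin n) ℂ := U * (X * Dm * Xᴴ) * star U with hCdef
  -- the unnormalized curve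
  set θ : ℝ → Matrix (Fin n) (Fin n) ℂ :=
    fun t => ρ + (t:ℂ) • V + (t:ℂ)^2 • B + (t:ℂ)^3 • C with hθdef
  have hfact : ∀ t : ℝ, θ t
      = (U * (1 + (t:ℂ) • X)) * (Δ + (t:ℂ) • Dm) * (U * (1 + (t:ℂ) • X))ᴴ := by
    intro t
    rw [factor_eq U X Δ Dm t, hθdef]
    rw [← hspec, ← hBdef, ← hCdef, hident, ← hVW]
  -- trace of the unnormalized curve
  have hτ : ∀ t : ℝ, (θ t).trace
      = 1 + (t:ℂ) * 0 + (t:ℂ)^2 * B.trace + (t:ℂ)^3 * C.trace := by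
    intro t
    rw [hθdef]
    simp only [Matrix.trace_add, Matrix.trace_smul, htr, hVtr, smul_eq_mul]
  have hτ0 : (θ 0).trace = 1 := by rw [hτ 0]; simp
  have hθ0 : θ 0 = ρ := by rw [hθdef]; simp
  -- the curve
  set γ : ℝ → Matrix (Fin n) (Fin n) ℂ := fun t => ((θ t).trace)⁻¹ • θ t with hγdef
  -- choose ε
  set S : ℝ := ∑ i, ∑ j, ‖Dm i j‖ with hSdef
  have hS0 : 0 ≤ S := Finset.sum_nonneg fun i _ => Finset.sum_nonneg fun j _ => by positivity
  set ε₁ : ℝ := c / (S + 1) with hε₁def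
  have hε₁ : 0 < ε₁ := div_pos hc0 (by linarith)
  have hε₁S : ∀ t : ℝ, |t| < ε₁ → |t| * S < c := by
    intro t ht
    have h1 : |t| * S ≤ |t| * (S + 1) := by nlinarith [abs_nonneg t]
    have h2 : |t| * (S + 1) < ε₁ * (S + 1) := by
      apply mul_lt_mul_of_pos_right ht
      linarith
    have h3 : ε₁ * (S + 1) = c := by
      rw [hε₁def]
      field_simp
    linarith
  -- continuity of the trace
  have hτcont : Continuous fun t : ℝ => (θ t).trace := by
    have : (fun t : ℝ => (θ t).trace)
        = fun t : ℝ => 1 + (t:ℂ) * 0 + (t:ℂ)^2 * B.trace + (t:ℂ)^3 * C.trace := funext hτ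
    rw [this]
    fun_prop
  have hτne : ∀ᶠ t : ℝ in nhds 0, (θ t).trace ≠ 0 := by
    apply hτcont.continuousAt.eventually_ne
    rw [hτ0]
    exact one_ne_zero
  obtain ⟨ε₂, hε₂, hε₂ne⟩ := Metric.eventually_nhds_iff.mp hτne
  refine ⟨min ε₁ ε₂, lt_min hε₁ hε₂, γ, ?_, ?_, ?_⟩
  · rw [hγdef]
    simp only [hθ0, htr, inv_one, one_smul]
  · -- derivative
    intro i j
    have hθder : HasDerivAt (fun t : ℝ => θ t i j) (V i j) 0 := by
      have : (fun t : ℝ => θ t i j)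
          = fun t : ℝ => ρ i j + (t:ℂ) * V i j + (t:ℂ)^2 * B i j + (t:ℂ)^3 * C i j := by
        funext t
        rw [hθdef]
        simp [Matrix.add_apply, Matrix.smul_apply, smul_eq_mul]
      rw [this]
      exact cubic_deriv' _ _ _ _
    have hτder : HasDerivAt (fun t : ℝ => (θ t).trace) 0 0 := by
      have : (fun t : ℝ => (θ t).trace)
          = fun t : ℝ => 1 + (t:ℂ) * 0 + (t:ℂ)^2 * B.trace + (t:ℂ)^3 * C.trace := funext hτ
      rw [this]
      exact cubic_deriv' _ _ _ _
    have hτne0 : (θ 0).trace ≠ 0 := by rw [hτ0]; exact one_ne_zero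
    have hmul := hθder.div hτder hτne0
    have : (fun t : ℝ => γ t i j) = fun t : ℝ => θ t i j / (θ t).trace := by
      funext t
      rw [hγdef]
      simp [Matrix.smul_apply, smul_eq_mul, inv_mul_eq_div]
    rw [this]
    have hval : (V i j * (θ 0).trace - θ 0 i j * 0) / (θ 0).trace ^ 2 = V i j := by
      rw [hτ0, hθ0]
      simp
    rw [hval] at hmul
    exact hmul
  · -- the pointwise properties
    intro t ht
    have ht1 : |t| < ε₁ := lt_of_lt_of_le ht (min_le_left _ _)
    have ht2 : |t| < ε₂ := lt_of_lt_of_le ht (min_le_right _ _)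
    have hkey := key_diag d c hcd Dm hDmH hDmsupp t (by rw [← hSdef]; exact hε₁S t ht1)
    have hMpsd : (Δ + (t:ℂ) • Dm).PosSemidef := hkey.1
    have hθpsd : (θ t).PosSemidef := by
      rw [hfact t]
      exact hMpsd.mul_mul_conjTranspose_same _
    have hτnn : 0 ≤ (θ t).trace := psd_trace_nonneg' hθpsd
    have hτne' : (θ t).trace ≠ 0 := hε₂ne (by rwa [Real.dist_eq, sub_zero])
    -- trace is a positive real
    have him : ((θ t).trace).im = 0 := ((Complex.le_def.mp hτnn).2).symm
    have hre : 0 ≤ ((θ t).trace).re := by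
      have := (Complex.le_def.mp hτnn).1
      simpa using this
    set r : ℝ := ((θ t).trace).re with hrdef
    have hτr : (θ t).trace = (r : ℂ) := by
      apply Complex.ext
      · simp [hrdef]
      · simp [him]
    have hrne : r ≠ 0 := by
      intro h
      apply hτne'
      rw [hτr, h, Complex.ofReal_zero]
    have hrpos : 0 < r := lt_of_le_of_ne hre (Ne.symm hrne)
    refine ⟨?_, ?_, ?_⟩
    · -- positive semidefinite
      rw [hγdef]
      simp only
      rw [hτr, ← Complex.ofReal_inv]
      exact psd_real_smul' hθpsd (le_of_lt (inv_pos.mpr hrpos))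
    · -- trace one
      rw [hγdef]
      simp only [Matrix.trace_smul, smul_eq_mul]
      exact inv_mul_cancel₀ hτne'
    · -- rank k
      rw [hγdef]
      simp only
      rw [rank_smul'' _ (inv_ne_zero hτne')]
      -- rank of θ t equals rank of the middle factor
      have hdetU : IsUnit U.det := by
        apply IsUnit.of_mul_eq_one (star U).det
        rw [← Matrix.det_mul, hU2, Matrix.det_one]
      have hdet1X : IsUnit (1 + (t:ℂ) • X).det := by
        apply IsUnit.of_mul_eq_one (1 - (t:ℂ) • X).det
        rw [← Matrix.det_mul]
        have : (1 + (t:ℂ) • X) * (1 - (t:ℂ) • X) = 1 := by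
          simp only [Matrix.mul_sub, Matrix.add_mul, Matrix.one_mul, Matrix.mul_one,
            Matrix.smul_mul, Matrix.mul_smul, smul_smul, hXsq, smul_zero]
          abel_nf
        rw [this, Matrix.det_one]
      have hdetA : IsUnit (U * (1 + (t:ℂ) • X)).det := by
        rw [Matrix.det_mul]
        exact hdetU.mul hdet1X
      have hdetAH : IsUnit ((U * (1 + (t:ℂ) • X))ᴴ).det := by
        rw [Matrix.det_conjTranspose]
        exact hdetA.star
      have hrankθ : (θ t).rank = (Δ + (t:ℂ) • Dm).rank := by
        rw [hfact t, mul_assoc,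
          Matrix.rank_mul_eq_right_of_isUnit_det _ _ hdetA,
          Matrix.rank_mul_eq_left_of_isUnit_det _ _ hdetAH]
      rw [hrankθ, rank_eq_of_ker_eq' _ Δ hkey.2]
      -- rank of Δ is k
      rw [hΔdef, Matrix.rank_diagonal, ← hrank, hH.rank_eq_card_non_zero_eigs]
      apply Fintype.card_congr
      exact Equiv.subtypeEquivRight fun i => by
        rw [← hddef]; simp [Complex.ofReal_ne_zero]
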